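/- Let ρ_AB, ρ_AC, ρ_BC be fully classical bipartite states. If some commutator among [ρ_AB ⊗ I_C, ρ_AC ⊗ I_B], [ρ_AB ⊗ I_C, ρ_BC ⊗ I_A], [ρ_AC ⊗ I_B, ρ_BC ⊗ I_A] is nonzero, then at least one of the single-party reduced states ρ_A, ρ_B, ρ_C has a repeated eigenvalue (is degenerate). -/
import Mathlib


open Matrix BigOperators
open scoped Kronecker ComplexOrder

namespace QMarginal

abbrev Mat (n : ℕ) := Matrix (Fin n) (Fin n) ℂ
abbrev Bip (m n : ℕ) := Matrix (Fin m × Fin n) (Fin m × Fin n) ℂ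
abbrev Tri (dA dB dC : ℕ) := Matrix (Fin dA × Fin dB × Fin dC) (Fin dA × Fin dB × Fin dC) ℂ

/-- partial trace over the third system -/
noncomputable def trC {dA dB dC : ℕ} (ρ : Tri dA dB dC) : Bip dA dB :=
  fun x y => ∑ c : Fin dC, ρ (x.1, x.2, c) (y.1, y.2, c)

/-- partial trace over the second system -/
noncomputable def trB {dA dB dC : ℕ} (ρ : Tri dA dB dC) : Bip dA dC :=
  fun x y => ∑ b : Fin dB, ρ (x.1, b, x.2) (y.1, b, y.2)

/-- partial trace over the first system -/
noncomputable def trA {dA dB dC : ℕ} (ρ : Tri dA dB dC) : Bip dB dC :=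
  fun x y => ∑ a : Fin dA, ρ (a, x.1, x.2) (a, y.1, y.2)

/-- partial trace of a bipartite matrix over the right factor -/
noncomputable def trR {m n : ℕ} (ρ : Bip m n) : Mat m :=
  fun i j => ∑ b : Fin n, ρ (i, b) (j, b)

/-- partial trace of a bipartite matrix over the left factor -/
noncomputable def trL {m n : ℕ} (ρ : Bip m n) : Mat n :=
  fun i j => ∑ a : Fin m, ρ (a, i) (a, j)

def IsDensity {ι : Type*} [Fintype ι] [DecidableEq ι] (ρ : Matrix ι ι ℂ) : Prop :=
  ρ.PosSemidef ∧ ρ.trace = 1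

/-- rank-one projector onto a vector -/
def projV {ι : Type*} (v : ι → ℂ) : Matrix ι ι ℂ := fun i j => v i * star (v j)

def prod2 {m n : ℕ} (v : Fin m → ℂ) (w : Fin n → ℂ) : Fin m × Fin n → ℂ :=
  fun x => v x.1 * w x.2

def prod3 {dA dB dC : ℕ} (u : Fin dA → ℂ) (v : Fin dB → ℂ) (w : Fin dC → ℂ) :
    Fin dA × Fin dB × Fin dC → ℂ :=
  fun x => u x.1 * v x.2.1 * w x.2.2

/-- a family of vectors forming an orthonormal basis -/
def ONB {n : ℕ} (a : Fin n → Fin n → ℂ) : Prop :=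
  ∀ i j, (∑ k, star (a i k) * a j k) = if i = j then (1:ℂ) else 0

/-- fully classical bipartite state -/
def FullyClassical {m n : ℕ} (ρ : Bip m n) : Prop :=
  ∃ (a : Fin m → Fin m → ℂ) (b : Fin n → Fin n → ℂ) (p : Fin m → Fin n → ℝ),
    ONB a ∧ ONB b ∧ (∀ i j, 0 ≤ p i j) ∧
    ρ = ∑ i, ∑ j, (p i j) • projV (prod2 (a i) (b j))

/-- fully classical tripartite state -/
def FullyClassicalTri {dA dB dC : ℕ} (ρ : Tri dA dB dC) : Prop :=
  ∃ (a : Fin dA → Fin dA → ℂ) (b : Fin dB → Fin dB → ℂ) (c : Fin dC → Fin dC → ℂ)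
    (f : Fin dA → Fin dB → Fin dC → ℝ),
    ONB a ∧ ONB b ∧ ONB c ∧ (∀ i j k, 0 ≤ f i j k) ∧
    ρ = ∑ i, ∑ j, ∑ k, (f i j k) • projV (prod3 (a i) (b j) (c k))

/-- fully separable tripartite state -/
def FullySepTri {dA dB dC : ℕ} (ρ : Tri dA dB dC) : Prop :=
  ∃ (N : ℕ) (p : Fin N → ℝ) (u : Fin N → Fin dA → ℂ) (v : Fin N → Fin dB → ℂ)
    (w : Fin N → Fin dC → ℂ),
    (∀ i, 0 ≤ p i) ∧ ρ = ∑ i, (p i) • projV (prod3 (u i) (v i) (w i))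

/-- M ⊗ I_C on the tripartite space, M acting on A ⊗ B -/
def embAB {dA dB : ℕ} (M : Bip dA dB) (dC : ℕ) : Tri dA dB dC :=
  fun x y => M (x.1, x.2.1) (y.1, y.2.1) * (if x.2.2 = y.2.2 then 1 else 0)

/-- M ⊗ I_B on the tripartite space, M acting on A ⊗ C -/
def embAC {dA dC : ℕ} (M : Bip dA dC) (dB : ℕ) : Tri dA dB dC :=
  fun x y => M (x.1, x.2.2) (y.1, y.2.2) * (if x.2.1 = y.2.1 then 1 else 0)

/-- M ⊗ I_A on the tripartite space, M acting on B ⊗ C -/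
def embBC {dB dC : ℕ} (M : Bip dB dC) (dA : ℕ) : Tri dA dB dC :=
  fun x y => M (x.2.1, x.2.2) (y.2.1, y.2.2) * (if x.1 = y.1 then 1 else 0)

/-- a matrix has a repeated eigenvalue -/
def Degenerate {n : ℕ} (ρ : Mat n) : Prop :=
  ∃ (μ : ℂ) (v w : Fin n → ℂ), LinearIndependent ℂ ![v, w] ∧
    ρ *ᵥ v = μ • v ∧ ρ *ᵥ w = μ • w

-- helper 1
lemma projV_mul_onb {ι κ : Type*} [Fintype ι] [DecidableEq κ] (e : κ → ι → ℂ)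
    (he : ∀ m m', (∑ k, star (e m k) * e m' k) = if m = m' then (1:ℂ) else 0)
    (u v : κ) : projV (e u) * projV (e v) = if u = v then projV (e u) else 0 := by
  ext i j
  have h1 : (projV (e u) * projV (e v)) i j
      = (e u i * star (e v j)) * ∑ k, star (e u k) * e v k := by
    simp only [Matrix.mul_apply, projV, Finset.mul_sum]
    exact Finset.sum_congr rfl fun k _ => by ring
  rw [h1, he]
  by_cases h : u = v
  · subst h; simp [projV]
  · simp [h]

-- completeness
lemma ONB.complete {n : ℕ} {a : Fin n → Fin n → ℂ} (h : ONB a) (m m' : Fin n) :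
    (∑ i, a i m * star (a i m')) = if m = m' then (1:ℂ) else 0 := by
  have hA : (Matrix.of fun i k => star (a i k)) * (Matrix.of fun i k => a i k)ᵀ = 1 := by
    ext i j
    simpa [Matrix.mul_apply, Matrix.one_apply] using h i j
  have h2 := mul_eq_one_comm.mp hA
  have h3 := congrFun (congrFun h2 m) m'
  simpa [Matrix.mul_apply, Matrix.one_apply] using h3

-- expansion
lemma onb_expand {n : ℕ} {a : Fin n → Fin n → ℂ} (ha : ONB a) (u : Fin n → ℂ) (m : Fin n) :
    u m = ∑ j, (∑ m', star (a j m') * u m') * a j m := by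
  have h1 : ∑ j, (∑ m', star (a j m') * u m') * a j m
      = ∑ m', (∑ j, a j m * star (a j m')) * u m' := by
    simp only [Finset.sum_mul]
    rw [Finset.sum_comm]
    exact Finset.sum_congr rfl fun y _ => Finset.sum_congr rfl fun x _ => by ring
  rw [h1]
  simp only [ha.complete]
  simp

-- Parseval
lemma onb_parseval {n : ℕ} {a : Fin n → Fin n → ℂ} (ha : ONB a) (u : Fin n → ℂ)
    (hu : (∑ m, star (u m) * u m) = 1) :
    (∑ j, star (∑ m, star (a j m) * u m) * (∑ m, star (a j m) * u m)) = 1 := by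
  have key : ∀ j, star (∑ m, star (a j m) * u m) * (∑ m, star (a j m) * u m)
      = ∑ m, ∑ m', (star (u m) * u m') * (a j m * star (a j m')) := by
    intro j
    rw [star_sum, Finset.sum_mul]
    apply Finset.sum_congr rfl; intro m _
    rw [Finset.mul_sum]
    apply Finset.sum_congr rfl; intro m' _
    simp only [star_mul', star_star]
    ring
  simp only [key]
  rw [Finset.sum_comm]
  have : ∀ m, ∑ j, ∑ m', (star (u m) * u m') * (a j m * star (a j m'))
      = ∑ m', (star (u m) * u m') * ∑ j, a j m * star (a j m') := by
    intro m
    rw [Finset.sum_comm]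
    apply Finset.sum_congr rfl; intro m' _
    rw [Finset.mul_sum]
  simp only [this, ha.complete]
  simpa using hu

-- mulVec of sum of projectors
lemma mulVec_sum_proj {n : ℕ} {κ : Type*} [Fintype κ] (q : κ → ℂ) (a : κ → Fin n → ℂ)
    (u : Fin n → ℂ) (x : Fin n) :
    ((∑ i, q i • projV (a i)) *ᵥ u) x = ∑ i, q i * (∑ m, star (a i m) * u m) * a i x := by
  simp only [Matrix.mulVec, dotProduct, Matrix.sum_apply, Matrix.smul_apply, projV,
    smul_eq_mul, Finset.sum_mul]
  rw [Finset.sum_comm]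
  apply Finset.sum_congr rfl; intro i _
  rw [Finset.mul_sum, Finset.sum_mul]
  exact Finset.sum_congr rfl fun m _ => by ring

-- eigenvector property
lemma eig_of_onb {n : ℕ} {a : Fin n → Fin n → ℂ} (ha : ONB a) (q : Fin n → ℂ) (j : Fin n) :
    (∑ i, q i • projV (a i)) *ᵥ a j = q j • a j := by
  funext x
  rw [mulVec_sum_proj, Finset.sum_eq_single j]
  · rw [ha j j, if_pos rfl]; simp
  · intro i _ hij; rw [ha i j, if_neg hij]; simp
  · simp

-- inner product with basis extracts coefficient
lemma inner_sum {n : ℕ} {a : Fin n → Fin n → ℂ} (ha : ONB a) (x : Fin n → ℂ) (j : Fin n) :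
    (∑ m, star (a j m) * (∑ i, x i * a i m)) = x j := by
  have : ∀ m, star (a j m) * (∑ i, x i * a i m) = ∑ i, x i * (star (a j m) * a i m) := by
    intro m; rw [Finset.mul_sum]; exact Finset.sum_congr rfl fun i _ => by ring
  simp only [this]
  rw [Finset.sum_comm]
  have h2 : ∀ i, ∑ m, x i * (star (a j m) * a i m) = x i * if j = i then 1 else 0 := by
    intro i; rw [← Finset.mul_sum, ha]
  simp only [h2]
  rw [Finset.sum_eq_single j] <;> simp
  intro i hij; simp [Ne.symm hij]

-- orthonormal pair is linearly independent
lemma onb_li {n : ℕ} {a : Fin n → Fin n → ℂ} (ha : ONB a) {i j : Fin n} (hij : i ≠ j) :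
    LinearIndependent ℂ ![a i, a j] := by
  rw [LinearIndependent.pair_iff]
  intro s t hst
  have key : ∀ l : Fin n, (∑ m, star (a l m) * (s * a i m + t * a j m)) = 0 := by
    intro l
    have := congrFun hst
    simp only [Pi.add_apply, Pi.smul_apply, smul_eq_mul] at this
    simp only [this, Pi.zero_apply, mul_zero, Finset.sum_const_zero]
  have expand : ∀ l : Fin n, (∑ m, star (a l m) * (s * a i m + t * a j m))
      = s * (∑ m, star (a l m) * a i m) + t * (∑ m, star (a l m) * a j m) := by
    intro l
    rw [Finset.mul_sum, Finset.mul_sum, ← Finset.sum_add_distrib]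
    exact Finset.sum_congr rfl fun m _ => by ring
  constructor
  · have := key i; rw [expand i, ha i i, ha i j, if_pos rfl, if_neg hij] at this; simpa using this
  · have := key j; rw [expand j, ha j i, ha j j, if_neg (Ne.symm hij), if_pos rfl] at this
    simpa using this

lemma align {n : ℕ} (ρ : Mat n) (a a' : Fin n → Fin n → ℂ) (q q' : Fin n → ℂ)
    (ha : ONB a) (ha' : ONB a')
    (hρ : ρ = ∑ i, q i • projV (a i))
    (hρ' : ρ = ∑ i, q' i • projV (a' i)) :
    Degenerate ρ ∨ ∀ k, ∃ m, projV (a' k) = projV (a m) := by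
  by_cases hd : Degenerate ρ
  · exact Or.inl hd
  right
  intro k
  set c : Fin n → ℂ := fun j => ∑ m, star (a j m) * a' k m with hcdef
  have heig : ∀ j, ρ *ᵥ a j = q j • a j := fun j => by rw [hρ]; exact eig_of_onb ha q j
  have heig' : ρ *ᵥ a' k = q' k • a' k := by rw [hρ']; exact eig_of_onb ha' q' k
  have key : ∀ j, q j * c j = q' k * c j := by
    intro j
    have h2 : (∑ m, star (a j m) * (ρ *ᵥ a' k) m) = q j * c j := by
      have h1 : ∀ m, (ρ *ᵥ a' k) m = ∑ i, (q i * c i) * a i m := by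
        intro m
        rw [hρ, mulVec_sum_proj]
      simp only [h1]
      exact inner_sum ha (fun i => q i * c i) j
    have h3 : (∑ m, star (a j m) * (ρ *ᵥ a' k) m) = q' k * c j := by
      have hterm : ∀ m, star (a j m) * (q' k • a' k) m = q' k * (star (a j m) * a' k m) := by
        intro m
        simp only [Pi.smul_apply, smul_eq_mul]
        ring
      rw [heig']
      simp only [hterm]
      rw [← Finset.mul_sum]
    rw [← h2, h3]
  have hpar : (∑ j, star (c j) * c j) = 1 := by
    apply onb_parseval ha
    simpa using ha' k k
  by_cases hex : ∃ j j', j ≠ j' ∧ c j ≠ 0 ∧ c j' ≠ 0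
  · exfalso
    obtain ⟨j, j', hjj, hcj, hcj'⟩ := hex
    have h1 : q j = q' k := mul_right_cancel₀ hcj (key j)
    have h2 : q j' = q' k := mul_right_cancel₀ hcj' (key j')
    refine hd ⟨q j, a j, a j', onb_li ha hjj, heig j, ?_⟩
    have h4 := heig j'
    rw [h2, ← h1] at h4
    exact h4
  · push_neg at hex
    have hone : ∃ j0, c j0 ≠ 0 := by
      by_contra hall
      push_neg at hall
      simp only [hall] at hpar
      simp at hpar
    obtain ⟨j0, hj0⟩ := hone
    have hzero : ∀ j, j ≠ j0 → c j = 0 := by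
      intro j hj
      by_contra hcj
      exact hcj (hex j0 j (Ne.symm hj) hj0)
    have hexp : ∀ m, a' k m = c j0 * a j0 m := by
      intro m
      rw [onb_expand ha (a' k) m, Finset.sum_eq_single j0]
      · intro j _ hj
        have h := hzero j hj
        simp only [hcdef] at h
        rw [h, zero_mul]
      · simp
    have hnorm : star (c j0) * c j0 = 1 := by
      rw [← hpar, Finset.sum_eq_single j0]
      · intro j _ hj; rw [hzero j hj]; simp
      · simp
    refine ⟨j0, ?_⟩
    ext i j
    simp only [projV, hexp, star_mul']
    have : c j0 * star (c j0) = 1 := by rw [mul_comm]; exact hnorm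
    calc c j0 * a j0 i * (star (c j0) * star (a j0 j))
        = (c j0 * star (c j0)) * (a j0 i * star (a j0 j)) := by ring
      _ = a j0 i * star (a j0 j) := by rw [this, one_mul]

lemma rsmul {ι κ : Type*} (r : ℝ) (M : Matrix ι κ ℂ) : r • M = (r : ℂ) • M := by
  ext i j
  simp [Complex.real_smul]

lemma onb_norm {n : ℕ} {a : Fin n → Fin n → ℂ} (ha : ONB a) (i : Fin n) :
    (∑ k, a i k * star (a i k)) = 1 := by
  have := ha i i
  rw [if_pos rfl] at this
  rw [← this]
  exact Finset.sum_congr rfl fun k _ => mul_comm _ _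

lemma trL_sum {m n : ℕ} {κ : Type*} [Fintype κ] (M : κ → Bip m n) :
    trL (∑ i, M i) = ∑ i, trL (M i) := by
  ext x y
  simp only [trL, Matrix.sum_apply]
  exact Finset.sum_comm

lemma trR_sum {m n : ℕ} {κ : Type*} [Fintype κ] (M : κ → Bip m n) :
    trR (∑ i, M i) = ∑ i, trR (M i) := by
  ext x y
  simp only [trR, Matrix.sum_apply]
  exact Finset.sum_comm

lemma trL_smul {m n : ℕ} (r : ℝ) (M : Bip m n) : trL (r • M) = r • trL M := by
  ext x y
  simp [trL, Matrix.smul_apply, Complex.real_smul, Finset.mul_sum]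

lemma trR_smul {m n : ℕ} (r : ℝ) (M : Bip m n) : trR (r • M) = r • trR M := by
  ext x y
  simp [trR, Matrix.smul_apply, Complex.real_smul, Finset.mul_sum]

lemma trL_proj {m n : ℕ} (v : Fin m → ℂ) (w : Fin n → ℂ) :
    trL (projV (prod2 v w)) = (∑ c, v c * star (v c)) • projV w := by
  ext x y
  simp only [trL, projV, prod2, Matrix.smul_apply, smul_eq_mul, Finset.sum_mul]
  exact Finset.sum_congr rfl fun c _ => by simp only [star_mul']; ring

lemma trR_proj {m n : ℕ} (v : Fin m → ℂ) (w : Fin n → ℂ) :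
    trR (projV (prod2 v w)) = (∑ c, w c * star (w c)) • projV v := by
  ext x y
  simp only [trR, projV, prod2, Matrix.smul_apply, smul_eq_mul, Finset.sum_mul]
  exact Finset.sum_congr rfl fun c _ => by simp only [star_mul']; ring

lemma trR_classical {m n : ℕ} (a : Fin m → Fin m → ℂ) (b : Fin n → Fin n → ℂ)
    (p : Fin m → Fin n → ℝ) (hb : ONB b) :
    trR (∑ i, ∑ j, (p i j) • projV (prod2 (a i) (b j)))
      = ∑ i, ((∑ j, p i j : ℝ) : ℂ) • projV (a i) := by
  simp only [trR_sum, trR_smul, trR_proj, onb_norm hb, one_smul]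
  apply Finset.sum_congr rfl; intro i _
  simp only [rsmul]
  rw [Complex.ofReal_sum, Finset.sum_smul]

lemma trL_classical {m n : ℕ} (a : Fin m → Fin m → ℂ) (b : Fin n → Fin n → ℂ)
    (p : Fin m → Fin n → ℝ) (ha : ONB a) :
    trL (∑ i, ∑ j, (p i j) • projV (prod2 (a i) (b j)))
      = ∑ j, ((∑ i, p i j : ℝ) : ℂ) • projV (b j) := by
  simp only [trL_sum, trL_smul, trL_proj, onb_norm ha, one_smul]
  rw [Finset.sum_comm]
  apply Finset.sum_congr rfl; intro j _
  simp only [rsmul]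
  rw [Complex.ofReal_sum, Finset.sum_smul]

lemma projV_prod3_apply {dA dB dC : ℕ} (u : Fin dA → ℂ) (v : Fin dB → ℂ) (w : Fin dC → ℂ)
    (x y : Fin dA × Fin dB × Fin dC) :
    projV (prod3 u v w) x y
      = projV u x.1 y.1 * projV v x.2.1 y.2.1 * projV w x.2.2 y.2.2 := by
  simp only [projV, prod3, star_mul']
  ring

lemma projV_prod3_congr {dA dB dC : ℕ} {u u' : Fin dA → ℂ} {v v' : Fin dB → ℂ}
    {w w' : Fin dC → ℂ} (hu : projV u = projV u') (hv : projV v = projV v')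
    (hw : projV w = projV w') :
    projV (prod3 u v w) = projV (prod3 u' v' w') := by
  ext x y
  rw [projV_prod3_apply, projV_prod3_apply, hu, hv, hw]

lemma prod3_onb {dA dB dC : ℕ} {a : Fin dA → Fin dA → ℂ} {b : Fin dB → Fin dB → ℂ}
    {c : Fin dC → Fin dC → ℂ} (ha : ONB a) (hb : ONB b) (hc : ONB c)
    (m m' : Fin dA × Fin dB × Fin dC) :
    (∑ x, star (prod3 (a m.1) (b m.2.1) (c m.2.2) x) * prod3 (a m'.1) (b m'.2.1) (c m'.2.2) x)
      = if m = m' then (1:ℂ) else 0 := by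
  have h1 : (∑ x : Fin dA × Fin dB × Fin dC,
        star (prod3 (a m.1) (b m.2.1) (c m.2.2) x) * prod3 (a m'.1) (b m'.2.1) (c m'.2.2) x)
      = (∑ i, star (a m.1 i) * a m'.1 i) * (∑ j, star (b m.2.1 j) * b m'.2.1 j)
        * (∑ k, star (c m.2.2 k) * c m'.2.2 k) := by
    rw [Fintype.sum_prod_type]
    simp only [Fintype.sum_prod_type]
    rw [Finset.sum_mul, Finset.sum_mul]
    apply Finset.sum_congr rfl; intro i _
    rw [mul_assoc, Finset.sum_mul_sum, Finset.mul_sum]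
    apply Finset.sum_congr rfl; intro x _
    rw [Finset.mul_sum]
    apply Finset.sum_congr rfl; intro y _
    simp only [prod3, star_mul']
    ring
  rw [h1, ha m.1 m'.1, hb m.2.1 m'.2.1, hc m.2.2 m'.2.2]
  by_cases e1 : m.1 = m'.1 <;> by_cases e2 : m.2.1 = m'.2.1 <;> by_cases e3 : m.2.2 = m'.2.2 <;>
    simp [e1, e2, e3, Prod.ext_iff]

lemma commute_single {ι : Type*} [Fintype ι] {κ : Type*} [DecidableEq κ] (e : κ → ι → ℂ)
    (he : ∀ m m', (∑ k, star (e m k) * e m' k) = if m = m' then (1:ℂ) else 0)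
    (xs yt : ℂ) (u v : κ) :
    (xs • projV (e u)) * (yt • projV (e v)) = (yt • projV (e v)) * (xs • projV (e u)) := by
  rw [smul_mul_assoc, smul_mul_assoc, mul_smul_comm, mul_smul_comm,
    projV_mul_onb e he, projV_mul_onb e he]
  by_cases h : u = v
  · rw [if_pos h, if_pos h.symm, h, smul_comm]
  · rw [if_neg h, if_neg (Ne.symm h)]
    simp

lemma commute_diag {ι κ₁ κ₂ κ : Type*} [Fintype ι] [Fintype κ₁] [Fintype κ₂] [DecidableEq κ]
    (e : κ → ι → ℂ)
    (he : ∀ m m', (∑ k, star (e m k) * e m' k) = if m = m' then (1:ℂ) else 0)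
    (x : κ₁ → ℂ) (y : κ₂ → ℂ) (f : κ₁ → κ) (g : κ₂ → κ) :
    (∑ s, x s • projV (e (f s))) * (∑ t, y t • projV (e (g t))) =
    (∑ t, y t • projV (e (g t))) * (∑ s, x s • projV (e (f s))) := by
  simp only [Finset.sum_mul, Finset.mul_sum]
  rw [Finset.sum_comm]
  apply Finset.sum_congr rfl; intro t _
  apply Finset.sum_congr rfl; intro s _
  exact commute_single e he (x t) (y s) (f t) (g s)

lemma projV_prod2_apply {m n : ℕ} (v : Fin m → ℂ) (w : Fin n → ℂ) (x y : Fin m × Fin n) :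
    projV (prod2 v w) x y = projV v x.1 y.1 * projV w x.2 y.2 := by
  simp only [projV, prod2, star_mul']
  ring

-- linearity of embeddings
lemma embAB_sum {dA dB dC : ℕ} {κ : Type*} [Fintype κ] (M : κ → Bip dA dB) :
    embAB (∑ i, M i) dC = ∑ i, embAB (M i) dC := by
  ext x y
  simp [embAB, Matrix.sum_apply, Finset.sum_mul]

lemma embAC_sum {dA dB dC : ℕ} {κ : Type*} [Fintype κ] (M : κ → Bip dA dC) :
    embAC (∑ i, M i) dB = ∑ i, embAC (M i) dB := by
  ext x y
  simp [embAC, Matrix.sum_apply, Finset.sum_mul]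

lemma embBC_sum {dA dB dC : ℕ} {κ : Type*} [Fintype κ] (M : κ → Bip dB dC) :
    embBC (∑ i, M i) dA = ∑ i, embBC (M i) dA := by
  ext x y
  simp [embBC, Matrix.sum_apply, Finset.sum_mul]

lemma embAB_smul {dA dB dC : ℕ} (r : ℂ) (M : Bip dA dB) :
    embAB (r • M) dC = r • embAB M dC := by
  ext x y
  simp [embAB, Matrix.smul_apply, mul_assoc]

lemma embAC_smul {dA dB dC : ℕ} (r : ℂ) (M : Bip dA dC) :
    embAC (r • M) dB = r • embAC M dB := by
  ext x y
  simp [embAC, Matrix.smul_apply, mul_assoc]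

lemma embBC_smul {dA dB dC : ℕ} (r : ℂ) (M : Bip dB dC) :
    embBC (r • M) dA = r • embBC M dA := by
  ext x y
  simp [embBC, Matrix.smul_apply, mul_assoc]

lemma embAB_proj {dA dB dC : ℕ} (v : Fin dA → ℂ) (w : Fin dB → ℂ)
    {c : Fin dC → Fin dC → ℂ} (hc : ONB c) :
    embAB (projV (prod2 v w)) dC = ∑ k, projV (prod3 v w (c k)) := by
  ext x y
  simp only [embAB, Matrix.sum_apply, projV_prod3_apply, projV_prod2_apply]
  have h1 : ∀ k, projV v x.1 y.1 * projV w x.2.1 y.2.1 * projV (c k) x.2.2 y.2.2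
      = (projV v x.1 y.1 * projV w x.2.1 y.2.1) * (c k x.2.2 * star (c k y.2.2)) := fun k => rfl
  simp only [h1]
  rw [← Finset.mul_sum, hc.complete]

lemma embAC_proj {dA dB dC : ℕ} (v : Fin dA → ℂ) (w : Fin dC → ℂ)
    {b : Fin dB → Fin dB → ℂ} (hb : ONB b) :
    embAC (projV (prod2 v w)) dB = ∑ j, projV (prod3 v (b j) w) := by
  ext x y
  simp only [embAC, Matrix.sum_apply, projV_prod3_apply, projV_prod2_apply]
  have h1 : ∀ j, projV v x.1 y.1 * projV (b j) x.2.1 y.2.1 * projV w x.2.2 y.2.2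
      = (projV v x.1 y.1 * projV w x.2.2 y.2.2) * (b j x.2.1 * star (b j y.2.1)) := by
    intro j
    simp only [projV]
    ring
  simp only [h1]
  rw [← Finset.mul_sum, hb.complete]

lemma embBC_proj {dA dB dC : ℕ} (v : Fin dB → ℂ) (w : Fin dC → ℂ)
    {a : Fin dA → Fin dA → ℂ} (ha : ONB a) :
    embBC (projV (prod2 v w)) dA = ∑ i, projV (prod3 (a i) v w) := by
  ext x y
  simp only [embBC, Matrix.sum_apply, projV_prod3_apply, projV_prod2_apply]
  have h1 : ∀ i, projV (a i) x.1 y.1 * projV v x.2.1 y.2.1 * projV w x.2.2 y.2.2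
      = (projV v x.2.1 y.2.1 * projV w x.2.2 y.2.2) * (a i x.1 * star (a i y.1)) := by
    intro i
    simp only [projV]
    ring
  simp only [h1]
  rw [← Finset.mul_sum, ha.complete]

lemma embAB_classical {dA dB dC : ℕ} (a : Fin dA → Fin dA → ℂ) (b : Fin dB → Fin dB → ℂ)
    (p : Fin dA → Fin dB → ℝ) {c : Fin dC → Fin dC → ℂ} (hc : ONB c) :
    embAB (∑ i, ∑ j, (p i j) • projV (prod2 (a i) (b j))) dC
      = ∑ m : Fin dA × Fin dB × Fin dC,
          ((p m.1 m.2.1 : ℝ) : ℂ) • projV (prod3 (a m.1) (b m.2.1) (c m.2.2)) := by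
  simp only [rsmul, embAB_sum, embAB_smul, embAB_proj _ _ hc, Finset.smul_sum]
  simp only [Fintype.sum_prod_type]

lemma embAC_classical {dA dB dC : ℕ} (a : Fin dA → Fin dA → ℂ) (c : Fin dC → Fin dC → ℂ)
    (p : Fin dA → Fin dC → ℝ) {b : Fin dB → Fin dB → ℂ} (hb : ONB b) :
    embAC (∑ i, ∑ k, (p i k) • projV (prod2 (a i) (c k))) dB
      = ∑ m : Fin dA × Fin dC × Fin dB,
          ((p m.1 m.2.1 : ℝ) : ℂ) • projV (prod3 (a m.1) (b m.2.2) (c m.2.1)) := by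
  simp only [rsmul, embAC_sum, embAC_smul, embAC_proj _ _ hb, Finset.smul_sum]
  simp only [Fintype.sum_prod_type]

lemma embBC_classical {dA dB dC : ℕ} (b : Fin dB → Fin dB → ℂ) (c : Fin dC → Fin dC → ℂ)
    (p : Fin dB → Fin dC → ℝ) {a : Fin dA → Fin dA → ℂ} (ha : ONB a) :
    embBC (∑ j, ∑ k, (p j k) • projV (prod2 (b j) (c k))) dA
      = ∑ m : Fin dB × Fin dC × Fin dA,
          ((p m.1 m.2.1 : ℝ) : ℂ) • projV (prod3 (a m.2.2) (b m.1) (c m.2.1)) := by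
  simp only [rsmul, embBC_sum, embBC_smul, embBC_proj _ _ ha, Finset.smul_sum]
  simp only [Fintype.sum_prod_type]


/-- a nonvanishing commutator forces a degenerate one-party marginal. -/
theorem stmt_3 {dA dB dC : ℕ}
    (ρAB : Bip dA dB) (ρAC : Bip dA dC) (ρBC : Bip dB dC)
    (hdAB : IsDensity ρAB) (hdAC : IsDensity ρAC) (hdBC : IsDensity ρBC)
    (hfcAB : FullyClassical ρAB) (hfcAC : FullyClassical ρAC)
    (hfcBC : FullyClassical ρBC)
    (ρA : Mat dA) (ρB : Mat dB) (ρC : Mat dC)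
    (hA : ρA = trR ρAB) (hA' : ρA = trR ρAC)
    (hB : ρB = trL ρAB) (hB' : ρB = trR ρBC)
    (hC : ρC = trL ρAC) (hC' : ρC = trL ρBC)
    (hcomm : embAB ρAB dC * embAC ρAC dB ≠ embAC ρAC dB * embAB ρAB dC ∨
             embAB ρAB dC * embBC ρBC dA ≠ embBC ρBC dA * embAB ρAB dC ∨
             embAC ρAC dB * embBC ρBC dA ≠ embBC ρBC dA * embAC ρAC dB) :
    Degenerate ρA ∨ Degenerate ρB ∨ Degenerate ρC := by

  obtain ⟨a, b, p, ha, hb, hp, hab⟩ := hfcAB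
  obtain ⟨a', c', p', ha', hc', hp', hac⟩ := hfcAC
  obtain ⟨b'', c'', p'', hb'', hc'', hp'', hbc⟩ := hfcBC
  have hρA1 : ρA = ∑ i, ((∑ j, p i j : ℝ) : ℂ) • projV (a i) := by
    rw [hA, hab, trR_classical a b p hb]
  have hρA2 : ρA = ∑ i, ((∑ k, p' i k : ℝ) : ℂ) • projV (a' i) := by
    rw [hA', hac, trR_classical a' c' p' hc']
  have hρB1 : ρB = ∑ j, ((∑ i, p i j : ℝ) : ℂ) • projV (b j) := by
    rw [hB, hab, trL_classical a b p ha]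
  have hρB2 : ρB = ∑ j, ((∑ k, p'' j k : ℝ) : ℂ) • projV (b'' j) := by
    rw [hB', hbc, trR_classical b'' c'' p'' hc'']
  have hρC1 : ρC = ∑ k, ((∑ i, p' i k : ℝ) : ℂ) • projV (c' k) := by
    rw [hC, hac, trL_classical a' c' p' ha']
  have hρC2 : ρC = ∑ k, ((∑ j, p'' j k : ℝ) : ℂ) • projV (c'' k) := by
    rw [hC', hbc, trL_classical b'' c'' p'' hb'']
  rcases align ρA a a' _ _ ha ha' hρA1 hρA2 with hdA | halA
  · exact Or.inl hdA
  rcases align ρB b b'' _ _ hb hb'' hρB1 hρB2 with hdB | halB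
  · exact Or.inr (Or.inl hdB)
  rcases align ρC c' c'' _ _ hc' hc'' hρC1 hρC2 with hdC | halC
  · exact Or.inr (Or.inr hdC)
  exfalso
  choose σ hσ using halA
  choose τ hτ using halB
  choose υ hυ using halC
  have comm1 : embAB ρAB dC * embAC ρAC dB = embAC ρAC dB * embAB ρAB dC := by
    rw [hab, hac, embAB_classical a b p hc', embAC_classical a' c' p' hb]
    have hY : ∀ m : Fin dA × Fin dC × Fin dB,
        projV (prod3 (a' m.1) (b m.2.2) (c' m.2.1))
          = projV (prod3 (a (σ m.1)) (b m.2.2) (c' m.2.1)) :=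
      fun m => projV_prod3_congr (hσ m.1) rfl rfl
    simp only [hY]
    exact commute_diag (fun m : Fin dA × Fin dB × Fin dC => prod3 (a m.1) (b m.2.1) (c' m.2.2))
      (prod3_onb ha hb hc')
      (fun m : Fin dA × Fin dB × Fin dC => ((p m.1 m.2.1 : ℝ) : ℂ))
      (fun m : Fin dA × Fin dC × Fin dB => ((p' m.1 m.2.1 : ℝ) : ℂ))
      (fun m => m) (fun m => (σ m.1, m.2.2, m.2.1))
  have comm2 : embAB ρAB dC * embBC ρBC dA = embBC ρBC dA * embAB ρAB dC := by
    rw [hab, hbc, embAB_classical a b p hc'', embBC_classical b'' c'' p'' ha]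
    have hY : ∀ m : Fin dB × Fin dC × Fin dA,
        projV (prod3 (a m.2.2) (b'' m.1) (c'' m.2.1))
          = projV (prod3 (a m.2.2) (b (τ m.1)) (c'' m.2.1)) :=
      fun m => projV_prod3_congr rfl (hτ m.1) rfl
    simp only [hY]
    exact commute_diag (fun m : Fin dA × Fin dB × Fin dC => prod3 (a m.1) (b m.2.1) (c'' m.2.2))
      (prod3_onb ha hb hc'')
      (fun m : Fin dA × Fin dB × Fin dC => ((p m.1 m.2.1 : ℝ) : ℂ))
      (fun m : Fin dB × Fin dC × Fin dA => ((p'' m.1 m.2.1 : ℝ) : ℂ))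
      (fun m => m) (fun m => (m.2.2, τ m.1, m.2.1))
  have comm3 : embAC ρAC dB * embBC ρBC dA = embBC ρBC dA * embAC ρAC dB := by
    rw [hac, hbc, embAC_classical a' c' p' hb'', embBC_classical b'' c'' p'' ha']
    have hY : ∀ m : Fin dB × Fin dC × Fin dA,
        projV (prod3 (a' m.2.2) (b'' m.1) (c'' m.2.1))
          = projV (prod3 (a' m.2.2) (b'' m.1) (c' (υ m.2.1))) :=
      fun m => projV_prod3_congr rfl rfl (hυ m.2.1)
    simp only [hY]
    exact commute_diag (fun m : Fin dA × Fin dB × Fin dC => prod3 (a' m.1) (b'' m.2.1) (c' m.2.2))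
      (prod3_onb ha' hb'' hc')
      (fun m : Fin dA × Fin dC × Fin dB => ((p' m.1 m.2.1 : ℝ) : ℂ))
      (fun m : Fin dB × Fin dC × Fin dA => ((p'' m.1 m.2.1 : ℝ) : ℂ))
      (fun m => (m.1, m.2.2, m.2.1)) (fun m => (m.2.2, m.1, υ m.2.1))
  rcases hcomm with h | h | h
  · exact h comm1
  · exact h comm2
  · exact h comm3
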